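/- Let α, β ∈ ℝ with β < α, let C ∈ ℂ with C ≠ 0, let M ≥ 0, R > 0, and let r : (R, ∞) × ℝ → ℂ satisfy |r(ρ, θ)| ≤ M ρ^β for all ρ > R and θ ∈ ℝ. Suppose that for all ρ > R and all θ ∈ ℝ: Im(C ρ^α e^{iαθ}) + Im r(ρ, θ) ≤ ρ |sin θ|. Then: (i) α ≤ 1; (ii) α is an integer; (iii) Im C ≤ 0; (iv) if α = 1 then C is real with |C| ≤ 1; (v) if α is an odd integer then Im C = 0. (These are the constraints on the leading asymptotic behavior ω = C k^α + O(|k|^β) of a dispersion relation of an isotropic system obeying the covariant stability bound Im ω ≤ |Im k| for complex k.) -/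

import Mathlib

open Filter

private lemma bdd_le_zero' {c : ℝ} {f : ℝ → ℝ} {R : ℝ}
    (hf : Tendsto f atTop (nhds 0)) (h : ∀ ρ : ℝ, R < ρ → c ≤ f ρ) : c ≤ 0 :=
  ge_of_tendsto hf ((eventually_gt_atTop R).mono h)

private lemma tendsto_rpow_zero' {t : ℝ} (ht : t < 0) :
    Tendsto (fun ρ : ℝ => ρ ^ t) atTop (nhds 0) := by
  have := tendsto_rpow_neg_atTop (neg_pos.mpr ht)
  simpa [neg_neg] using this

private lemma geom_abs_le' {w : ℂ} (hw : ‖w‖ = 1) (h1 : w ≠ 1) (N : ℕ) :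
    ‖∑ n ∈ Finset.range N, w ^ n‖ ≤ 2 / ‖w - 1‖ := by
  rw [geom_sum_eq h1, norm_div]
  have hd : 0 < ‖w - 1‖ := norm_pos_iff.mpr (sub_ne_zero.mpr h1)
  gcongr
  calc ‖w ^ N - 1‖ ≤ ‖w ^ N‖ + ‖-1‖ := by
        simpa [sub_eq_add_neg] using norm_add_le (w ^ N) (-1)
    _ = 2 := by rw [norm_pow, hw, one_pow]; norm_num

private lemma im_sq' (u : ℂ) : u.im ^ 2 = ((‖u‖) ^ 2 - (u ^ 2).re) / 2 := by
  have h2 : (u ^ 2).re = u.re * u.re - u.im * u.im := by rw [pow_two, Complex.mul_re]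
  rw [h2, Complex.sq_norm, Complex.normSq_apply]
  ring

private lemma core' {z w : ℂ} (hz : z ≠ 0) (hw : ‖w‖ = 1)
    (h1 : w ≠ 1) (h2 : w ^ 2 ≠ 1) (h : ∀ n : ℕ, (z * w ^ n).im ≤ 0) : False := by
  set A := ‖z‖ with hA
  have hA0 : 0 < A := norm_pos_iff.mpr hz
  have hw2 : ‖w ^ 2‖ = 1 := by rw [norm_pow, hw, one_pow]
  set K1 : ℝ := 2 / ‖w - 1‖ with hK1
  set K2 : ℝ := 2 / ‖w ^ 2 - 1‖ with hK2
  have habs : ∀ n : ℕ, ‖z * w ^ n‖ = A := by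
    intro n; rw [norm_mul, norm_pow, hw, one_pow, mul_one]
  have hfA : ∀ n : ℕ, -(z * w ^ n).im ≤ A := by
    intro n
    have h1' := Complex.abs_im_le_norm (z * w ^ n)
    rw [habs n] at h1'
    have := neg_abs_le ((z * w ^ n).im)
    linarith [abs_nonneg ((z * w ^ n).im), le_abs_self ((z * w ^ n).im),
      neg_le_abs ((z * w ^ n).im)]
  -- lower bound on the sum of im's
  have hsum : ∀ N : ℕ, -(A * K1) ≤ ∑ n ∈ Finset.range N, (z * w ^ n).im := by
    intro N
    have he : (∑ n ∈ Finset.range N, (z * w ^ n).im) =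
        (z * ∑ n ∈ Finset.range N, w ^ n).im := by
      rw [Finset.mul_sum, Complex.im_sum]
    rw [he]
    have hb : ‖z * ∑ n ∈ Finset.range N, w ^ n‖ ≤ A * K1 := by
      rw [norm_mul]
      exact mul_le_mul_of_nonneg_left (geom_abs_le' hw h1 N) (norm_nonneg z)
    have := Complex.abs_im_le_norm (z * ∑ n ∈ Finset.range N, w ^ n)
    linarith [neg_abs_le ((z * ∑ n ∈ Finset.range N, w ^ n).im)]
  -- lower bound on the sum of squares
  have hsq : ∀ n : ℕ, ((z * w ^ n).im) ^ 2 = (A ^ 2 - (z ^ 2 * (w ^ 2) ^ n).re) / 2 := by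
    intro n
    rw [im_sq' (z * w ^ n), habs n]
    congr 2
    rw [mul_pow, ← pow_mul, ← pow_mul, mul_comm n 2]
  have hresum : ∀ N : ℕ, ∑ n ∈ Finset.range N, (z ^ 2 * (w ^ 2) ^ n).re ≤ A ^ 2 * K2 := by
    intro N
    have he : (∑ n ∈ Finset.range N, (z ^ 2 * (w ^ 2) ^ n).re) =
        (z ^ 2 * ∑ n ∈ Finset.range N, (w ^ 2) ^ n).re := by
      rw [Finset.mul_sum, Complex.re_sum]
    rw [he]
    have hb : ‖z ^ 2 * ∑ n ∈ Finset.range N, (w ^ 2) ^ n‖ ≤ A ^ 2 * K2 := by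
      rw [norm_mul, norm_pow]
      exact mul_le_mul_of_nonneg_left (geom_abs_le' hw2 h2 N)
        (pow_nonneg (norm_nonneg z) 2)
    have := Complex.re_le_norm (z ^ 2 * ∑ n ∈ Finset.range N, (w ^ 2) ^ n)
    linarith
  -- upper bound on the sum of squares via nonpositivity
  have hup : ∀ N : ℕ, ∑ n ∈ Finset.range N, ((z * w ^ n).im) ^ 2 ≤ A * (A * K1) := by
    intro N
    have h1' : ∑ n ∈ Finset.range N, ((z * w ^ n).im) ^ 2 ≤
        ∑ n ∈ Finset.range N, A * (-(z * w ^ n).im) := by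
      apply Finset.sum_le_sum
      intro n _
      have hn := h n
      nlinarith [hfA n]
    have h2' : ∑ n ∈ Finset.range N, A * (-(z * w ^ n).im) =
        A * (-(∑ n ∈ Finset.range N, (z * w ^ n).im)) := by
      rw [← Finset.mul_sum, ← Finset.sum_neg_distrib]
    rw [h2'] at h1'
    have := hsum N
    nlinarith
  -- combine
  obtain ⟨N, hN⟩ := exists_nat_gt (K2 + 2 * K1)
  have hlow : (N * A ^ 2 - A ^ 2 * K2) / 2 ≤ ∑ n ∈ Finset.range N, ((z * w ^ n).im) ^ 2 := by
    have : ∑ n ∈ Finset.range N, ((z * w ^ n).im) ^ 2 =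
        (N * A ^ 2 - ∑ n ∈ Finset.range N, (z ^ 2 * (w ^ 2) ^ n).re) / 2 := by
      rw [Finset.sum_congr rfl (fun n _ => hsq n), ← Finset.sum_div,
        Finset.sum_sub_distrib, Finset.sum_const, Finset.card_range, nsmul_eq_mul]
    rw [this]
    have := hresum N
    linarith
  have := hup N
  nlinarith [mul_lt_mul_of_pos_left hN (mul_pos hA0 hA0)]
theorem stable_isotropic_leading_asymptotics (α β : ℝ) (hβα : β < α)
    (C : ℂ) (hC : C ≠ 0) (M R : ℝ) (hM : 0 ≤ M) (hR : 0 < R)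
    (r : ℝ → ℝ → ℂ)
    (hr : ∀ ρ θ : ℝ, R < ρ → ‖r ρ θ‖ ≤ M * ρ ^ β)
    (h : ∀ ρ θ : ℝ, R < ρ →
      (C * ((ρ ^ α : ℝ) : ℂ) * Complex.exp (Complex.I * α * θ)).im + (r ρ θ).im ≤
        ρ * |Real.sin θ|) :
    α ≤ 1 ∧ (∃ m : ℤ, α = m) ∧ C.im ≤ 0 ∧
      (α = 1 → C.im = 0 ∧ ‖C‖ ≤ 1) ∧
      (∀ m : ℤ, α = 2 * m + 1 → C.im = 0) := by
  have hA0 : 0 < ‖C‖ := norm_pos_iff.mpr hC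
  have htβα : β - α < 0 := by linarith
  have hlim : ∀ c : ℝ, (∀ ρ : ℝ, R < ρ → c ≤ M * ρ ^ (β - α)) → c ≤ 0 := by
    intro c hc
    refine bdd_le_zero' ?_ hc
    simpa using (tendsto_rpow_zero' htβα).const_mul M
  set w : ℂ := Complex.exp (Complex.I * α * Real.pi) with hwdef
  have hwabs : ‖w‖ = 1 := by
    rw [hwdef, Complex.norm_exp]
    have : (Complex.I * (α : ℂ) * (Real.pi : ℂ)).re = 0 := by simp
    rw [this, Real.exp_zero]
  -- Step A : Im (C w^n) ≤ 0 for all integers n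
  have hstepA : ∀ n : ℤ, (C * w ^ n).im ≤ 0 := by
    intro n
    apply hlim
    intro ρ hρ
    have hρ0 : (0:ℝ) < ρ := hR.trans hρ
    have hh := h ρ ((n : ℝ) * Real.pi) hρ
    rw [Real.sin_int_mul_pi n, abs_zero, mul_zero] at hh
    have hexp : Complex.exp (Complex.I * α * (((n : ℝ) * Real.pi : ℝ) : ℂ)) = w ^ n := by
      rw [hwdef, ← Complex.exp_int_mul]
      congr 1
      push_cast
      ring
    rw [hexp] at hh
    have him : (C * ((ρ ^ α : ℝ) : ℂ) * w ^ n).im = ρ ^ α * (C * w ^ n).im := by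
      rw [show C * ((ρ ^ α : ℝ) : ℂ) * w ^ n = ((ρ ^ α : ℝ) : ℂ) * (C * w ^ n) by ring,
        Complex.im_ofReal_mul]
    rw [him] at hh
    have hrle : -(M * ρ ^ β) ≤ (r ρ ((n : ℝ) * Real.pi)).im := by
      have h1 := Complex.abs_im_le_norm (r ρ ((n : ℝ) * Real.pi))
      have h2 := hr ρ ((n : ℝ) * Real.pi) hρ
      linarith [neg_abs_le ((r ρ ((n : ℝ) * Real.pi)).im)]
    have hρα : (0:ℝ) < ρ ^ α := Real.rpow_pos_of_pos hρ0 α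
    rw [Real.rpow_sub hρ0, mul_div_assoc', le_div_iff₀ hρα]
    nlinarith
  -- Step B : w = 1 or w = -1
  have hw2 : w = 1 ∨ w = -1 := by
    by_contra hcon
    push_neg at hcon
    obtain ⟨hw1, hwm1⟩ := hcon
    have hsq : w ^ 2 ≠ 1 := by
      intro hsq
      have hfac : (w - 1) * (w + 1) = 0 := by linear_combination hsq
      rcases mul_eq_zero.mp hfac with hx | hx
      · exact hw1 (sub_eq_zero.mp hx)
      · exact hwm1 (eq_neg_of_add_eq_zero_left hx)
    exact core' hC hwabs hw1 hsq (fun n => by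
      have := hstepA (n : ℤ)
      simpa using this)
  -- Step (ii) : α is an integer
  have him_w : w.im = Real.sin (α * Real.pi) := by
    rw [hwdef, show Complex.I * (α : ℂ) * (Real.pi : ℂ) =
      ((α * Real.pi : ℝ) : ℂ) * Complex.I by push_cast; ring]
    exact Complex.exp_ofReal_mul_I_im (α * Real.pi)
  have hsin0 : Real.sin (α * Real.pi) = 0 := by
    rcases hw2 with h1 | h1 <;> rw [h1] at him_w <;> simpa using him_w.symm
  obtain ⟨m, hm⟩ := Real.sin_eq_zero_iff.mp hsin0
  have hαm : α = (m : ℝ) := (mul_right_cancel₀ Real.pi_ne_zero hm).symm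
  -- Step (iii) : Im C ≤ 0
  have hiii : C.im ≤ 0 := by
    have := hstepA 0
    simpa using this
  -- Step (v) : odd integer α forces Im C = 0
  have hv : ∀ m : ℤ, α = 2 * m + 1 → C.im = 0 := by
    intro k hk
    have hwm : w = -1 := by
      rw [hwdef, show Complex.I * (α : ℂ) * (Real.pi : ℂ) =
          ((2 * k + 1 : ℤ) : ℂ) * ((Real.pi : ℂ) * Complex.I) by
        rw [show (α : ℂ) = ((2 * (k : ℝ) + 1 : ℝ) : ℂ) from congrArg (fun x : ℝ => (x : ℂ)) hk]
        push_cast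
        ring]
      rw [Complex.exp_int_mul, Complex.exp_pi_mul_I]
      exact Odd.neg_one_zpow ⟨k, by ring⟩
    have h1 := hstepA 1
    rw [hwm] at h1
    simp at h1
    linarith
  -- key inequality for steps (i) and (iv)
  have hkey : ∀ θ₀ : ℝ, α * θ₀ = Real.pi / 2 - C.arg → ∀ ρ : ℝ, R < ρ →
      ‖C‖ * ρ ^ α ≤ ρ * |Real.sin θ₀| + M * ρ ^ β := by
    intro θ₀ hθ₀ ρ hρ
    have hh := h ρ θ₀ hρ
    have hexp : C * Complex.exp (Complex.I * α * θ₀) = Complex.I * (‖C‖ : ℂ) := by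
      have e1 : Complex.I * (α : ℂ) * (θ₀ : ℂ) =
          ((Real.pi / 2 : ℝ) : ℂ) * Complex.I + ((-C.arg : ℝ) : ℂ) * Complex.I := by
        have e0 : (α * θ₀ : ℝ) = Real.pi / 2 + -C.arg := by linarith [hθ₀]
        calc Complex.I * (α : ℂ) * (θ₀ : ℂ) = ((α * θ₀ : ℝ) : ℂ) * Complex.I := by
              push_cast; ring
          _ = _ := by rw [e0]; push_cast; ring
      have e2 : Complex.exp (((Real.pi / 2 : ℝ) : ℂ) * Complex.I) = Complex.I := by
        rw [Complex.exp_mul_I, ← Complex.ofReal_cos, ← Complex.ofReal_sin,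
          Real.cos_pi_div_two, Real.sin_pi_div_two]
        simp
      have e3 : C * Complex.exp (((-C.arg : ℝ) : ℂ) * Complex.I) = (‖C‖ : ℂ) := by
        nth_rewrite 1 [← Complex.norm_mul_exp_arg_mul_I C]
        rw [mul_assoc, ← Complex.exp_add,
          show (C.arg : ℂ) * Complex.I + ((-C.arg : ℝ) : ℂ) * Complex.I = 0 by push_cast; ring,
          Complex.exp_zero, mul_one]
      rw [e1, Complex.exp_add]
      calc C * (Complex.exp (((Real.pi / 2 : ℝ) : ℂ) * Complex.I) *
              Complex.exp (((-C.arg : ℝ) : ℂ) * Complex.I))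
          = Complex.exp (((Real.pi / 2 : ℝ) : ℂ) * Complex.I) *
              (C * Complex.exp (((-C.arg : ℝ) : ℂ) * Complex.I)) := by ring
        _ = Complex.I * (‖C‖ : ℂ) := by rw [e2, e3]
    have him : (C * ((ρ ^ α : ℝ) : ℂ) * Complex.exp (Complex.I * α * θ₀)).im
        = ρ ^ α * ‖C‖ := by
      rw [show C * ((ρ ^ α : ℝ) : ℂ) * Complex.exp (Complex.I * ↑α * ↑θ₀)
          = ((ρ ^ α : ℝ) : ℂ) * (C * Complex.exp (Complex.I * ↑α * ↑θ₀)) by ring,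
        Complex.im_ofReal_mul, hexp]
      simp
    rw [him] at hh
    have hrle : -(M * ρ ^ β) ≤ (r ρ θ₀).im := by
      have h1 := Complex.abs_im_le_norm (r ρ θ₀)
      have h2 := hr ρ θ₀ hρ
      linarith [neg_abs_le ((r ρ θ₀).im)]
    rw [mul_comm]
    linarith
  -- Step (i) : α ≤ 1
  have hi : α ≤ 1 := by
    by_contra hgt
    push_neg at hgt
    have hα0 : α ≠ 0 := by linarith
    set θ₀ : ℝ := (Real.pi / 2 - C.arg) / α with hθdef
    have hθ₀ : α * θ₀ = Real.pi / 2 - C.arg := by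
      rw [hθdef, mul_div_cancel₀ _ hα0]
    have hb : ∀ ρ : ℝ, R < ρ →
        ‖C‖ ≤ |Real.sin θ₀| * ρ ^ (1 - α) + M * ρ ^ (β - α) := by
      intro ρ hρ
      have hρ0 : (0:ℝ) < ρ := hR.trans hρ
      have hρα : (0:ℝ) < ρ ^ α := Real.rpow_pos_of_pos hρ0 α
      have hk := hkey θ₀ hθ₀ ρ hρ
      have h2 := mul_le_mul_of_nonneg_right hk (inv_nonneg.mpr hρα.le)
      rw [show (1:ℝ) - α = 1 + -α by ring, Real.rpow_add hρ0, Real.rpow_one,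
        show β - α = β + -α by ring, Real.rpow_add hρ0, Real.rpow_neg hρ0.le]
      calc ‖C‖ = ‖C‖ * ρ ^ α * (ρ ^ α)⁻¹ := by field_simp
        _ ≤ (ρ * |Real.sin θ₀| + M * ρ ^ β) * (ρ ^ α)⁻¹ := h2
        _ = |Real.sin θ₀| * (ρ * (ρ ^ α)⁻¹) + M * (ρ ^ β * (ρ ^ α)⁻¹) := by ring
    have htd : Filter.Tendsto
        (fun ρ : ℝ => |Real.sin θ₀| * ρ ^ (1 - α) + M * ρ ^ (β - α)) atTop (nhds 0) := by
      have h1 := (tendsto_rpow_zero' (show 1 - α < 0 by linarith)).const_mul |Real.sin θ₀|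
      have h2 := (tendsto_rpow_zero' htβα).const_mul M
      simpa using h1.add h2
    have := bdd_le_zero' htd hb
    linarith
  -- Step (iv)
  have hiv : α = 1 → C.im = 0 ∧ ‖C‖ ≤ 1 := by
    intro hα1
    refine ⟨hv 0 (by rw [hα1]; norm_num), ?_⟩
    set θ₀ : ℝ := Real.pi / 2 - C.arg with hθdef
    have hθ₀ : α * θ₀ = Real.pi / 2 - C.arg := by rw [hα1, one_mul]
    have hb : ∀ ρ : ℝ, R < ρ →
        ‖C‖ - |Real.sin θ₀| ≤ M * ρ ^ (β - 1) := by
      intro ρ hρ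
      have hρ0 : (0:ℝ) < ρ := hR.trans hρ
      have hk := hkey θ₀ hθ₀ ρ hρ
      rw [hα1, Real.rpow_one] at hk
      have h2 := mul_le_mul_of_nonneg_right hk (inv_nonneg.mpr hρ0.le)
      rw [show β - 1 = β + -1 by ring, Real.rpow_add hρ0, Real.rpow_neg_one]
      have hc : ‖C‖ * ρ * ρ⁻¹ = ‖C‖ := by field_simp
      have hd : (ρ * |Real.sin θ₀| + M * ρ ^ β) * ρ⁻¹
          = |Real.sin θ₀| * (ρ * ρ⁻¹) + M * (ρ ^ β * ρ⁻¹) := by ring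
      rw [hc, hd, mul_inv_cancel₀ hρ0.ne', mul_one] at h2
      linarith
    have htd : Filter.Tendsto (fun ρ : ℝ => M * ρ ^ (β - 1)) atTop (nhds 0) := by
      simpa using (tendsto_rpow_zero' (show β - 1 < 0 by linarith)).const_mul M
    have h3 := bdd_le_zero' htd hb
    linarith [Real.abs_sin_le_one θ₀]
  exact ⟨hi, ⟨m, hαm⟩, hiii, hiv, hv⟩
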